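/- For every ϖ ∈ ℝ³, the map (u, u̇, ü) ↦ 𝓔(u, u̇, ü) is differentiable at every point with u ≠ 0, and its Fréchet derivative at (u, u̇, ü) applied to the direction (ϖ × u, ϖ × u̇, ϖ × ü) equals ϖ × 𝓔(u, u̇, ü). (This is the Lie-derivative invariance L(𝔵'')(𝓔) = ϖ × 𝓔 under the third-order prolongation of infinitesimal Euclidean rotations.) -/

import Mathlib

noncomputable section
open RealInnerProductSpace

/-- Three-dimensional Euclidean space. -/
abbrev E3 := EuclideanSpace ℝ (Fin 3)

/-- The cross product on ℝ³. -/
def cross (a b : E3) : E3 :=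
  (WithLp.equiv 2 (Fin 3 → ℝ)).symm
    ![a 1 * b 2 - a 2 * b 1, a 2 * b 0 - a 0 * b 2, a 0 * b 1 - a 1 * b 0]

/-- The Euler–Poisson expression
𝓔(u, u̇, ü) = (ü × u)/‖u‖³ − 3((u̇·u)/‖u‖⁵)(u̇ × u) + (m/‖u‖³)(‖u‖² u̇ − (u̇·u) u). -/
def EP (m : ℝ) (u du ddu : E3) : E3 :=
  (‖u‖ ^ 3)⁻¹ • cross ddu u - (3 * ⟪du, u⟫ / ‖u‖ ^ 5) • cross du u
    + (m / ‖u‖ ^ 3) • (‖u‖ ^ 2 • du - ⟪du, u⟫ • u)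

lemma crossE3_apply (a b : E3) (i : Fin 3) :
    cross a b i = ![a 1 * b 2 - a 2 * b 1, a 2 * b 0 - a 0 * b 2, a 0 * b 1 - a 1 * b 0] i := rfl

lemma inner_e3 (a b : E3) : ⟪a, b⟫ = a 0 * b 0 + a 1 * b 1 + a 2 * b 2 := by
  simp [PiLp.inner_apply, Fin.sum_univ_three, RCLike.inner_apply, mul_comm]

lemma inner_cross_self (w x : E3) : ⟪x, cross w x⟫ = 0 := by
  simp [inner_e3, crossE3_apply, Fin.sum_univ_three]; ring

lemma inner_cross_mix (w x y : E3) : ⟪x, cross w y⟫ + ⟪cross w x, y⟫ = 0 := by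
  simp [inner_e3, crossE3_apply, Fin.sum_univ_three]; ring

lemma cross_add_left' (a a' b : E3) : cross (a + a') b = cross a b + cross a' b := by
  ext i; fin_cases i <;> simp [crossE3_apply, Fin.sum_univ_three] <;> ring

lemma cross_add_right' (a b b' : E3) : cross a (b + b') = cross a b + cross a b' := by
  ext i; fin_cases i <;> simp [crossE3_apply, Fin.sum_univ_three] <;> ring

lemma cross_smul_left' (t : ℝ) (a b : E3) : cross (t • a) b = t • cross a b := by
  ext i; fin_cases i <;> simp [crossE3_apply, Fin.sum_univ_three] <;> ring

lemma cross_smul_right' (t : ℝ) (a b : E3) : cross a (t • b) = t • cross a b := by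
  ext i; fin_cases i <;> simp [crossE3_apply, Fin.sum_univ_three] <;> ring

lemma cross_sub_right' (a b b' : E3) : cross a (b - b') = cross a b - cross a b' := by
  ext i; fin_cases i <;> simp [crossE3_apply, Fin.sum_univ_three] <;> ring

lemma cross_leibniz (w x y : E3) :
    cross w (cross x y) = cross (cross w x) y + cross x (cross w y) := by
  ext i; fin_cases i <;> simp [crossE3_apply, Fin.sum_univ_three] <;> ring

lemma DifferentiableAt.crossE3 {H : Type*} [NormedAddCommGroup H] [NormedSpace ℝ H]
    {f g : H → E3} {x : H} (hf : DifferentiableAt ℝ f x) (hg : DifferentiableAt ℝ g x) :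
    DifferentiableAt ℝ (fun p => cross (f p) (g p)) x := by
  rw [differentiableAt_euclidean]
  have hf' : ∀ j, DifferentiableAt ℝ (fun p => f p j) x := differentiableAt_euclidean.1 hf
  have hg' : ∀ j, DifferentiableAt ℝ (fun p => g p j) x := differentiableAt_euclidean.1 hg
  intro i
  fin_cases i <;> simp only [crossE3_apply, Matrix.cons_val_zero, Matrix.cons_val_one,
      Matrix.head_cons] <;>
    exact ((hf' _).mul (hg' _)).sub ((hf' _).mul (hg' _))

theorem EP_infinitesimal_invariance (m : ℝ) (ϖ : E3) (u du ddu : E3) (hu : u ≠ 0) :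
    DifferentiableAt ℝ (fun p : E3 × E3 × E3 => EP m p.1 p.2.1 p.2.2) (u, du, ddu) ∧
    fderiv ℝ (fun p : E3 × E3 × E3 => EP m p.1 p.2.1 p.2.2) (u, du, ddu)
        (cross ϖ u, cross ϖ du, cross ϖ ddu)
      = cross ϖ (EP m u du ddu) := by
  have hn : ‖u‖ ≠ 0 := norm_ne_zero_iff.2 hu
  have hn3 : ‖u‖ ^ 3 ≠ 0 := pow_ne_zero 3 hn
  have hn5 : ‖u‖ ^ 5 ≠ 0 := pow_ne_zero 5 hn
  -- Differentiability
  have hfst : DifferentiableAt ℝ (fun p : E3 × E3 × E3 => p.1) (u, du, ddu) :=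
    differentiableAt_fst
  have hsnd1 : DifferentiableAt ℝ (fun p : E3 × E3 × E3 => p.2.1) (u, du, ddu) :=
    differentiableAt_snd.fst
  have hsnd2 : DifferentiableAt ℝ (fun p : E3 × E3 × E3 => p.2.2) (u, du, ddu) :=
    differentiableAt_snd.snd
  have hnorm : DifferentiableAt ℝ (fun p : E3 × E3 × E3 => ‖p.1‖) (u, du, ddu) :=
    hfst.norm ℝ hu
  have hinner : DifferentiableAt ℝ (fun p : E3 × E3 × E3 => ⟪p.2.1, p.1⟫) (u, du, ddu) :=
    hsnd1.inner ℝ hfst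
  have hd : DifferentiableAt ℝ (fun p : E3 × E3 × E3 => EP m p.1 p.2.1 p.2.2) (u, du, ddu) := by
    have t1 : DifferentiableAt ℝ (fun p : E3 × E3 × E3 => (‖p.1‖ ^ 3)⁻¹) (u, du, ddu) :=
      (hnorm.pow 3).inv hn3
    have t2 : DifferentiableAt ℝ
        (fun p : E3 × E3 × E3 => 3 * ⟪p.2.1, p.1⟫ / ‖p.1‖ ^ 5) (u, du, ddu) := by
      simp only [div_eq_mul_inv]
      exact (hinner.const_mul 3).mul ((hnorm.pow 5).inv hn5)
    have t3 : DifferentiableAt ℝ (fun p : E3 × E3 × E3 => m / ‖p.1‖ ^ 3) (u, du, ddu) := by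
      simp only [div_eq_mul_inv]
      exact (differentiableAt_const m).mul ((hnorm.pow 3).inv hn3)
    have t4 : DifferentiableAt ℝ
        (fun p : E3 × E3 × E3 => ‖p.1‖ ^ 2 • p.2.1 - ⟪p.2.1, p.1⟫ • p.1) (u, du, ddu) :=
      ((hnorm.pow 2).smul hsnd1).sub (hinner.smul hfst)
    unfold EP
    exact ((t1.smul (hsnd2.crossE3 hfst)).sub (t2.smul (hsnd1.crossE3 hfst))).add (t3.smul t4)
  refine ⟨hd, ?_⟩
  -- The directional derivative computation
  set a := cross ϖ u with ha
  set b := cross ϖ du with hb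
  set c := cross ϖ ddu with hc
  have hau : ⟪u, a⟫ = 0 := inner_cross_self ϖ u
  have hmix : ⟪du, a⟫ + ⟪b, u⟫ = 0 := inner_cross_mix ϖ du u
  set q : ℝ → ℝ := fun t => ‖u‖ ^ 2 + t ^ 2 * ‖a‖ ^ 2 with hqdef
  have hnormsq : ∀ t : ℝ, ‖u + t • a‖ ^ 2 = q t := by
    intro t
    rw [norm_add_sq_real, real_inner_smul_right, hau, norm_smul]
    simp [hqdef, mul_pow]
  have hq0 : q 0 = ‖u‖ ^ 2 := by simp [hqdef]
  have hqpos : q 0 ≠ 0 := by rw [hq0]; exact pow_ne_zero 2 hn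
  have hnfun : ∀ t : ℝ, ‖u + t • a‖ = Real.sqrt (q t) := by
    intro t
    rw [← hnormsq t, Real.sqrt_sq (norm_nonneg _)]
  have hq' : HasDerivAt q 0 0 := by
    have h : HasDerivAt (fun t : ℝ => ‖u‖ ^ 2 + t ^ 2 * ‖a‖ ^ 2)
        ((2 : ℕ) * (0 : ℝ) ^ 1 * ‖a‖ ^ 2) 0 := ((hasDerivAt_pow 2 0).mul_const _).const_add _
    simpa [hqdef] using h
  have hN : HasDerivAt (fun t : ℝ => ‖u + t • a‖) 0 0 := by
    have h := (Real.hasDerivAt_sqrt hqpos).comp 0 hq'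
    simp only [Function.comp_def] at h
    have heq : (fun t : ℝ => ‖u + t • a‖) = fun t => Real.sqrt (q t) := funext hnfun
    rw [heq]
    simpa using h
  have hval : ‖u + (0 : ℝ) • a‖ = ‖u‖ := by simp
  have hN3 : HasDerivAt (fun t : ℝ => ‖u + t • a‖ ^ 3) 0 0 := by
    simpa using hN.fun_pow 3
  have hN5 : HasDerivAt (fun t : ℝ => ‖u + t • a‖ ^ 5) 0 0 := by
    simpa using hN.fun_pow 5
  have hN3ne : ‖u + (0 : ℝ) • a‖ ^ 3 ≠ 0 := by rw [hval]; exact hn3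
  have hN5ne : ‖u + (0 : ℝ) • a‖ ^ 5 ≠ 0 := by rw [hval]; exact hn5
  have hNinv : HasDerivAt (fun t : ℝ => (‖u + t • a‖ ^ 3)⁻¹) 0 0 := by
    simpa using hN3.fun_inv hN3ne
  have hifun : ∀ t : ℝ, ⟪du + t • b, u + t • a⟫ = ⟪du, u⟫ + t ^ 2 * ⟪b, a⟫ := by
    intro t
    rw [inner_add_left, inner_add_right, inner_add_right, real_inner_smul_right,
      real_inner_smul_left, real_inner_smul_left, real_inner_smul_right]
    linear_combination t * hmix
  have hI : HasDerivAt (fun t : ℝ => ⟪du + t • b, u + t • a⟫) 0 0 := by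
    have h : HasDerivAt (fun t : ℝ => ⟪du, u⟫ + t ^ 2 * ⟪b, a⟫)
        ((2 : ℕ) * (0 : ℝ) ^ 1 * ⟪b, a⟫) 0 := ((hasDerivAt_pow 2 0).mul_const _).const_add _
    have heq : (fun t : ℝ => ⟪du + t • b, u + t • a⟫) =
        fun t => ⟪du, u⟫ + t ^ 2 * ⟪b, a⟫ := funext hifun
    rw [heq]
    simpa using h
  have hI0 : ⟪du + (0 : ℝ) • b, u + (0 : ℝ) • a⟫ = ⟪du, u⟫ := by simp
  have hC2 : HasDerivAt (fun t : ℝ => 3 * ⟪du + t • b, u + t • a⟫ / ‖u + t • a‖ ^ 5)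
      (3 * ⟪du, u⟫ / ‖u‖ ^ 5 * 0) 0 := by
    have h := (hI.const_mul 3).fun_div hN5 hN5ne
    simpa [hI0, hval] using h
  have hC3 : HasDerivAt (fun t : ℝ => m / ‖u + t • a‖ ^ 3) 0 0 := by
    have h := (hasDerivAt_const (0 : ℝ) m).fun_div hN3 hN3ne
    simpa using h
  have hlin : ∀ v0 v1 : E3, HasDerivAt (fun t : ℝ => v0 + t • v1) v1 0 := by
    intro v0 v1
    simpa using (hasDerivAt_const (0 : ℝ) v0).fun_add ((hasDerivAt_id (0 : ℝ)).smul_const v1)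
  have poly : ∀ v0 v1 v2 : E3, HasDerivAt (fun t : ℝ => v0 + t • v1 + t ^ 2 • v2) v1 0 := by
    intro v0 v1 v2
    have h2 : HasDerivAt (fun t : ℝ => t ^ 2 • v2) (((2 : ℕ) * (0 : ℝ) ^ 1) • v2) 0 :=
      (hasDerivAt_pow 2 0).smul_const v2
    simpa using (hlin v0 v1).fun_add h2
  have hX : HasDerivAt (fun t : ℝ => cross (ddu + t • c) (u + t • a))
      (cross c u + cross ddu a) 0 := by
    have heq : (fun t : ℝ => cross (ddu + t • c) (u + t • a)) =
        fun t : ℝ => cross ddu u + t • (cross c u + cross ddu a) + t ^ 2 • cross c a := by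
      funext t
      simp only [cross_add_left', cross_add_right', cross_smul_left', cross_smul_right',
        smul_add, smul_smul]
      module
    rw [heq]; exact poly _ _ _
  have hY : HasDerivAt (fun t : ℝ => cross (du + t • b) (u + t • a))
      (cross b u + cross du a) 0 := by
    have heq : (fun t : ℝ => cross (du + t • b) (u + t • a)) =
        fun t : ℝ => cross du u + t • (cross b u + cross du a) + t ^ 2 • cross b a := by
      funext t
      simp only [cross_add_left', cross_add_right', cross_smul_left', cross_smul_right',
        smul_add, smul_smul]
      module
    rw [heq]; exact poly _ _ _
  have hZ : HasDerivAt
      (fun t : ℝ => ‖u + t • a‖ ^ 2 • (du + t • b) - ⟪du + t • b, u + t • a⟫ • (u + t • a))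
      (‖u‖ ^ 2 • b - ⟪du, u⟫ • a) 0 := by
    have hZ1 : HasDerivAt (fun t : ℝ => q t • (du + t • b)) (‖u‖ ^ 2 • b) 0 := by
      have h := hq'.fun_smul (hlin du b)
      simpa [hq0] using h
    have hZ2 : HasDerivAt (fun t : ℝ => ⟪du + t • b, u + t • a⟫ • (u + t • a))
        (⟪du, u⟫ • a) 0 := by
      have h := hI.fun_smul (hlin u a)
      simpa [hI0] using h
    have h := hZ1.fun_sub hZ2
    have heq : (fun t : ℝ =>
        ‖u + t • a‖ ^ 2 • (du + t • b) - ⟪du + t • b, u + t • a⟫ • (u + t • a)) =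
        fun t : ℝ => q t • (du + t • b) - ⟪du + t • b, u + t • a⟫ • (u + t • a) := by
      funext t; rw [hnormsq t]
    rw [heq]; exact h
  -- assemble g
  have hg : HasDerivAt (fun t : ℝ => EP m (u + t • a) (du + t • b) (ddu + t • c))
      ((‖u‖ ^ 3)⁻¹ • (cross c u + cross ddu a)
        - (3 * ⟪du, u⟫ / ‖u‖ ^ 5) • (cross b u + cross du a)
        + (m / ‖u‖ ^ 3) • (‖u‖ ^ 2 • b - ⟪du, u⟫ • a)) 0 := by
    have h1 := hNinv.fun_smul hX
    have h2 := hC2.fun_smul hY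
    have h3 := hC3.fun_smul hZ
    have h := (h1.fun_sub h2).fun_add h3
    simp only [EP]
    simpa [hval, hI0, zero_smul, add_zero, zero_add, mul_zero, smul_add] using h
  -- relate to fderiv
  have hline : HasDerivAt
      (fun t : ℝ => ((u, du, ddu) : E3 × E3 × E3) + t • ((a, b, c) : E3 × E3 × E3))
      ((a, b, c) : E3 × E3 × E3) 0 := by
    simpa using (hasDerivAt_const (0 : ℝ) ((u, du, ddu) : E3 × E3 × E3)).fun_add
      ((hasDerivAt_id (0 : ℝ)).smul_const ((a, b, c) : E3 × E3 × E3))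
  have hcomp : HasDerivAt
      (fun t : ℝ => (fun p : E3 × E3 × E3 => EP m p.1 p.2.1 p.2.2)
        (((u, du, ddu) : E3 × E3 × E3) + t • ((a, b, c) : E3 × E3 × E3)))
      (fderiv ℝ (fun p : E3 × E3 × E3 => EP m p.1 p.2.1 p.2.2) (u, du, ddu) (a, b, c)) 0 :=
    (hd.hasFDerivAt).comp_hasDerivAt_of_eq 0 hline (by simp)
  have hfg : (fun t : ℝ => (fun p : E3 × E3 × E3 => EP m p.1 p.2.1 p.2.2)
      (((u, du, ddu) : E3 × E3 × E3) + t • ((a, b, c) : E3 × E3 × E3))) =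
      fun t : ℝ => EP m (u + t • a) (du + t • b) (ddu + t • c) := by
    funext t
    simp [Prod.smul_mk, Prod.mk_add_mk]
  rw [hfg] at hcomp
  have hDeq := hcomp.unique hg
  rw [hDeq]
  -- final algebraic identity
  simp only [EP, cross_add_right', cross_sub_right', cross_smul_right', cross_leibniz,
    ← ha, ← hb, ← hc]
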